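/- There exists a convergent sequence (z_n)_{n≥0} of complex numbers that is not the Taylor coefficient sequence of any analytic function f belonging to the Besov space B⁰_{1,∞}; that is, the space c is not contained in { (f̂(n))_{n≥0} : f ∈ B⁰_{1,∞} }. -/

import Mathlib

set_option maxHeartbeats 1000000

open Filter Finset

/-- Coefficients of the polynomials `W_n`: `Ŵ_0` is the indicator of `{0,1}`; for `n ≥ 1`,
`Ŵ_n` is the triangular function with peak `1` at `2^n`, supported in `(2^(n-1), 2^(n+1))`. -/
noncomputable def Wcoef : ℕ → ℕ → ℝ
  | 0, k => if k ≤ 1 then 1 else 0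
  | (n + 1), k =>
      if 2 ^ n ≤ k ∧ k ≤ 2 ^ (n + 1) then ((k : ℝ) - 2 ^ n) / 2 ^ n
      else if 2 ^ (n + 1) ≤ k ∧ k ≤ 2 ^ (n + 2) then ((2 ^ (n + 2) : ℝ) - k) / 2 ^ (n + 1)
      else 0

/-- `(f * W_n)(z) = ∑_k f̂(k) Ŵ_n(k) z^k` for the Taylor coefficient sequence `f`. -/
noncomputable def convW (f : ℕ → ℂ) (n : ℕ) (z : ℂ) : ℂ :=
  ∑ k ∈ Finset.range (2 ^ (n + 1) + 1), f k * (Wcoef n k : ℂ) * z ^ k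

/-- L¹ norm over the unit circle with respect to normalized Lebesgue measure. -/
noncomputable def l1Circle (g : ℂ → ℂ) : ℝ :=
  (2 * Real.pi)⁻¹ * ∫ θ in (0 : ℝ)..(2 * Real.pi), ‖g (Complex.exp (θ * Complex.I))‖

/-- `f ∈ B⁰_{1,∞}`: the L¹ norms over the circle of `f*W_n` are uniformly bounded. -/
def MemB01inf (f : ℕ → ℂ) : Prop :=
  ∃ C : ℝ, ∀ n : ℕ, l1Circle (convW f n) ≤ C

/-- A sequence of complex numbers having a limit at infinity (an element of `c`). -/
def IsConvergent (x : ℕ → ℂ) : Prop := ∃ l : ℂ, Filter.Tendsto x Filter.atTop (nhds l)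

lemma integral_exp_int_ne (m : ℤ) (hm : m ≠ 0) :
    (∫ θ in (0:ℝ)..(2 * Real.pi), Complex.exp (m * θ * Complex.I)) = 0 := by
  have hc : (m : ℂ) * Complex.I ≠ 0 := by
    simp [Complex.I_ne_zero, hm]
  have h1 : ∀ θ : ℝ, (m:ℂ) * θ * Complex.I = ((m:ℂ) * Complex.I) * θ := by intro θ; ring
  simp_rw [h1]
  rw [integral_exp_mul_complex hc]
  push_cast
  rw [show (m:ℂ) * Complex.I * (2*Real.pi) = m * (2*Real.pi*Complex.I) by ring,
    Complex.exp_int_mul_two_pi_mul_I]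
  simp

lemma orth (j k : ℕ) :
    (∫ θ in (0:ℝ)..(2*Real.pi),
        Complex.exp (j * θ * Complex.I) * (starRingEnd ℂ) (Complex.exp (k * θ * Complex.I)))
      = if j = k then (2*Real.pi : ℂ) else 0 := by
  set m : ℤ := (j:ℤ) - (k:ℤ) with hm
  have key : ∀ θ : ℝ, Complex.exp (j*θ*Complex.I) * (starRingEnd ℂ) (Complex.exp (k*θ*Complex.I))
      = Complex.exp ((m : ℂ) * θ * Complex.I) := by
    intro θ
    rw [← Complex.exp_conj, ← Complex.exp_add]
    congr 1
    simp only [map_mul, Complex.conj_I, Complex.conj_ofReal, Complex.conj_natCast, hm]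
    push_cast; ring
  simp_rw [key]
  rcases eq_or_ne j k with h | h
  · subst h
    have : m = 0 := by omega
    rw [this]
    simp
  · rw [if_neg h, integral_exp_int_ne]
    omega

lemma cont_trig (a : ℕ → ℂ) (N : ℕ) :
    Continuous (fun θ : ℝ => ∑ k ∈ range N, a k * Complex.exp (k * θ * Complex.I)) := by
  refine continuous_finset_sum _ fun k _ => continuous_const.mul ?_
  exact Complex.continuous_exp.comp
    ((continuous_const.mul Complex.continuous_ofReal).mul continuous_const)

lemma integral_double_sum (N : ℕ) (F : ℕ → ℕ → ℝ → ℂ)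
    (hF : ∀ j k, IntervalIntegrable (F j k) MeasureTheory.volume 0 (2*Real.pi)) :
    (∫ θ in (0:ℝ)..(2*Real.pi), ∑ j ∈ range N, ∑ k ∈ range N, F j k θ)
      = ∑ j ∈ range N, ∑ k ∈ range N, ∫ θ in (0:ℝ)..(2*Real.pi), F j k θ := by
  have h2 : ∀ j, IntervalIntegrable (fun θ => ∑ k ∈ range N, F j k θ)
      MeasureTheory.volume 0 (2*Real.pi) := by
    intro j
    have h := IntervalIntegrable.sum (μ := MeasureTheory.volume) (a := 0) (b := 2*Real.pi)
      (range N) (f := fun k => F j k) (fun k _ => hF j k)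
    rwa [show (∑ k ∈ range N, F j k) = fun θ => ∑ k ∈ range N, F j k θ from by
      ext θ; simp] at h
  rw [intervalIntegral.integral_finset_sum (f := fun j θ => ∑ k ∈ range N, F j k θ)
    (fun j _ => h2 j)]
  exact Finset.sum_congr rfl fun j _ =>
    intervalIntegral.integral_finset_sum fun k _ => hF j k

lemma parseval (N : ℕ) (a : ℕ → ℂ) :
    (∫ θ in (0:ℝ)..(2*Real.pi), ‖∑ k ∈ range N, a k * Complex.exp (k * θ * Complex.I)‖^2)
      = 2 * Real.pi * ∑ k ∈ range N, ‖a k‖^2 := by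
  set S : ℝ → ℂ := fun θ => ∑ k ∈ range N, a k * Complex.exp (k*θ*Complex.I) with hS
  have contS : Continuous S := cont_trig a N
  have h1 : ∀ θ, (‖S θ‖^2 : ℝ) = Complex.reCLM (S θ * (starRingEnd ℂ) (S θ)) := by
    intro θ
    simp only [Complex.reCLM_apply, Complex.mul_conj]
    rw [Complex.normSq_eq_norm_sq, Complex.ofReal_re]
  change (∫ θ in (0:ℝ)..(2*Real.pi), ‖S θ‖^2) = _
  simp_rw [h1]
  have hInt : IntervalIntegrable (fun θ => S θ * (starRingEnd ℂ) (S θ))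
      MeasureTheory.volume 0 (2*Real.pi) :=
    (contS.mul (Complex.continuous_conj.comp contS)).intervalIntegrable _ _
  rw [Complex.reCLM.intervalIntegral_comp_comm hInt]
  have expand : ∀ θ : ℝ, S θ * (starRingEnd ℂ) (S θ)
      = ∑ j ∈ range N, ∑ k ∈ range N, (a j * (starRingEnd ℂ) (a k)) *
          (Complex.exp (j*θ*Complex.I) * (starRingEnd ℂ) (Complex.exp (k*θ*Complex.I))) := by
    intro θ
    rw [hS]
    simp only [map_sum, Finset.sum_mul_sum, map_mul]
    refine Finset.sum_congr rfl fun j _ => Finset.sum_congr rfl fun k _ => ?_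
    ring
  have hterm : ∀ j k : ℕ, IntervalIntegrable
      (fun θ : ℝ => (a j * (starRingEnd ℂ) (a k)) *
        (Complex.exp (j*θ*Complex.I) * (starRingEnd ℂ) (Complex.exp (k*θ*Complex.I))))
      MeasureTheory.volume 0 (2*Real.pi) := by
    intro j k
    apply Continuous.intervalIntegrable
    have cexp : ∀ i : ℕ, Continuous (fun θ : ℝ => Complex.exp (i*θ*Complex.I)) := fun i =>
      Complex.continuous_exp.comp
        ((continuous_const.mul Complex.continuous_ofReal).mul continuous_const)
    exact continuous_const.mul ((cexp j).mul (Complex.continuous_conj.comp (cexp k)))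
  have hIntegral : (∫ θ in (0:ℝ)..(2*Real.pi), S θ * (starRingEnd ℂ) (S θ))
      = ∑ j ∈ range N, ∑ k ∈ range N, (a j * (starRingEnd ℂ) (a k)) *
          (if j = k then (2*Real.pi : ℂ) else 0) := by
    simp_rw [expand]
    rw [integral_double_sum N _ hterm]
    exact Finset.sum_congr rfl fun j _ => Finset.sum_congr rfl fun k _ => by
      rw [intervalIntegral.integral_const_mul, orth]
  rw [hIntegral]
  have hdiag : ∀ j ∈ range N,
      (∑ k ∈ range N, (a j * (starRingEnd ℂ) (a k)) * (if j = k then (2*Real.pi : ℂ) else 0))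
        = ((‖a j‖^2 : ℝ) : ℂ) * ((2*Real.pi : ℝ) : ℂ) := by
    intro j hj
    rw [Finset.sum_eq_single j]
    · rw [if_pos rfl, Complex.mul_conj, Complex.normSq_eq_norm_sq]
      push_cast
      ring
    · intro k _ hk
      rw [if_neg fun h => hk h.symm, mul_zero]
    · intro h; exact absurd hj h
  rw [Finset.sum_congr rfl hdiag, map_sum, Finset.mul_sum]
  refine Finset.sum_congr rfl fun k _ => ?_
  rw [← Complex.ofReal_mul]
  simp only [Complex.reCLM_apply, Complex.ofReal_re]
  ring

/-- Rudin–Shapiro coefficient pair. -/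
noncomputable def rs : ℕ → (ℕ → ℂ) × (ℕ → ℂ)
  | 0 => (fun k => if k = 0 then 1 else 0, fun k => if k = 0 then 1 else 0)
  | (s+1) =>
      (fun k => if k < 2^s then (rs s).1 k
        else if k < 2^(s+1) then (rs s).2 (k - 2^s) else 0,
       fun k => if k < 2^s then (rs s).1 k
        else if k < 2^(s+1) then -((rs s).2 (k - 2^s)) else 0)

lemma rs_norm (s : ℕ) : ∀ k < 2^s, ‖(rs s).1 k‖ = 1 ∧ ‖(rs s).2 k‖ = 1 := by
  induction s with
  | zero =>
    intro k hk
    interval_cases k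
    simp [rs]
  | succ s ih =>
    intro k hk
    by_cases h : k < 2^s
    · have h1 : (rs (s+1)).1 k = (rs s).1 k := by simp [rs, h]
      have h2 : (rs (s+1)).2 k = (rs s).1 k := by simp [rs, h]
      rw [h1, h2]
      exact ⟨(ih k h).1, (ih k h).1⟩
    · have hsub : k - 2^s < 2^s := by
        have : 2^(s+1) = 2^s + 2^s := by rw [pow_succ]; ring
        omega
      have h1 : (rs (s+1)).1 k = (rs s).2 (k - 2^s) := by simp [rs, h, hk]
      have h2 : (rs (s+1)).2 k = -((rs s).2 (k - 2^s)) := by simp [rs, h, hk]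
      rw [h1, h2, norm_neg]
      exact ⟨(ih _ hsub).2, (ih _ hsub).2⟩

noncomputable def Pe (s : ℕ) (z : ℂ) : ℂ := ∑ k ∈ range (2^s), (rs s).1 k * z^k
noncomputable def Qe (s : ℕ) (z : ℂ) : ℂ := ∑ k ∈ range (2^s), (rs s).2 k * z^k

lemma sum_split (N : ℕ) (f : ℕ → ℂ) :
    ∑ k ∈ range (2*N), f k = ∑ k ∈ range N, f k + ∑ j ∈ range N, f (N + j) := by
  rw [Finset.range_eq_Ico, ← Finset.sum_Ico_consecutive _ (Nat.zero_le N) (by omega : N ≤ 2*N),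
    ← Finset.range_eq_Ico, Finset.sum_Ico_eq_sum_range]
  congr 1
  apply Finset.sum_congr (by congr 1; omega) fun j _ => rfl

lemma Pe_succ (s : ℕ) (z : ℂ) : Pe (s+1) z = Pe s z + z^(2^s) * Qe s z := by
  unfold Pe Qe
  have h2 : (2:ℕ)^(s+1) = 2 * 2^s := by ring
  rw [h2, sum_split]
  congr 1
  · apply Finset.sum_congr rfl fun k hk => ?_
    have hk' : k < 2^s := Finset.mem_range.mp hk
    simp [rs, hk']
  · rw [Finset.mul_sum]
    apply Finset.sum_congr rfl fun j hj => ?_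
    have hj' : j < 2^s := Finset.mem_range.mp hj
    have h1 : ¬ (2^s + j < 2^s) := by omega
    have h3 : 2^s + j < 2^(s+1) := by
      have : 2^(s+1) = 2^s + 2^s := by rw [pow_succ]; ring
      omega
    have hc : (rs (s+1)).1 (2^s + j) = (rs s).2 j := by
      simp [rs, h1, h3]
    rw [hc, pow_add]
    ring

lemma Qe_succ (s : ℕ) (z : ℂ) : Qe (s+1) z = Pe s z - z^(2^s) * Qe s z := by
  unfold Pe Qe
  have h2 : (2:ℕ)^(s+1) = 2 * 2^s := by ring
  rw [h2, sum_split]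
  have e1 : ∑ k ∈ range (2^s), (rs (s+1)).2 k * z^k
      = ∑ k ∈ range (2^s), (rs s).1 k * z^k := by
    apply Finset.sum_congr rfl fun k hk => ?_
    have hk' : k < 2^s := Finset.mem_range.mp hk
    simp [rs, hk']
  have e2 : ∑ j ∈ range (2^s), (rs (s+1)).2 (2^s + j) * z^(2^s + j)
      = -(z^(2^s) * ∑ k ∈ range (2^s), (rs s).2 k * z^k) := by
    rw [Finset.mul_sum, ← Finset.sum_neg_distrib]
    apply Finset.sum_congr rfl fun j hj => ?_
    have hj' : j < 2^s := Finset.mem_range.mp hj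
    have h1 : ¬ (2^s + j < 2^s) := by simp
    have h3 : 2^s + j < 2^(s+1) := by
      have : 2^(s+1) = 2^s + 2^s := by rw [pow_succ]; ring
      omega
    have hc : (rs (s+1)).2 (2^s + j) = -((rs s).2 j) := by
      simp [rs, h1, h3]
    rw [hc, pow_add]
    ring
  rw [e1, e2]
  ring

lemma PQ_norm (s : ℕ) {z : ℂ} (hz : ‖z‖ = 1) :
    ‖Pe s z‖^2 + ‖Qe s z‖^2 = 2^(s+1) := by
  induction s with
  | zero =>
    have : Pe 0 z = 1 := by simp [Pe, rs]
    have hq : Qe 0 z = 1 := by simp [Qe, rs]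
    rw [this, hq]
    norm_num
  | succ s ih =>
    rw [Pe_succ, Qe_succ]
    have hw : ‖z^(2^s) * Qe s z‖ = ‖Qe s z‖ := by
      rw [norm_mul, norm_pow, hz, one_pow, one_mul]
    have hpar := parallelogram_law_with_norm ℂ (Pe s z) (z^(2^s) * Qe s z)
    have h2 : (2:ℝ)^(s+1+1) = 2 * 2^(s+1) := by ring
    rw [h2, ← ih]
    nlinarith [hpar, hw, norm_nonneg (Pe s z), norm_nonneg (Qe s z)]

lemma Wcoef_lower {p k : ℕ} (h1 : 2^(p+1) ≤ k) (h2 : k < 2^(p+1) + 2^p) :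
    1/2 ≤ Wcoef (p+1) k ∧ Wcoef (p+1) k ≤ 1 := by
  have hp0 : (0:ℝ) < 2^p := by positivity
  have hp1 : (0:ℝ) < 2^(p+1) := by positivity
  rcases eq_or_lt_of_le h1 with heq | hlt
  · have : Wcoef (p+1) k = 1 := by
      simp only [Wcoef]
      rw [if_pos ⟨by omega, by omega⟩, ← heq]
      push_cast [pow_succ]
      field_simp
      ring
    rw [this]; norm_num
  · have hnot : ¬ (2^p ≤ k ∧ k ≤ 2^(p+1)) := by omega
    have hyes : 2^(p+1) ≤ k ∧ k ≤ 2^(p+2) := by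
      constructor
      · omega
      · have : 2^(p+1) + 2^p ≤ 2^(p+2) := by
          have e1 : (2:ℕ)^(p+1) = 2 * 2^p := by ring
          have e2 : (2:ℕ)^(p+2) = 4 * 2^p := by ring
          omega
        omega
    have hval : Wcoef (p+1) k = ((2^(p+2) : ℝ) - k) / 2^(p+1) := by
      simp only [Wcoef]
      rw [if_neg hnot, if_pos hyes]
    rw [hval]
    have hk1 : (k:ℝ) < 2^(p+1) + 2^p := by exact_mod_cast h2
    have hk2 : (2^(p+1) : ℝ) ≤ k := by exact_mod_cast h1
    have e2 : (2:ℝ)^(p+2) = 2^(p+1) + 2^(p+1) := by ring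
    have e1 : (2:ℝ)^(p+1) = 2^p + 2^p := by ring
    constructor
    · rw [le_div_iff₀ hp1]
      nlinarith
    · rw [div_le_one hp1]
      nlinarith

lemma Wcoef_zero_left {p k : ℕ} (h : k < 2^p) : Wcoef (p+1) k = 0 := by
  have h2 : (2:ℕ)^p ≤ 2^(p+1) := Nat.pow_le_pow_right (by norm_num) (by omega)
  simp only [Wcoef]
  rw [if_neg (by omega), if_neg (by omega)]

lemma Wcoef_zero_right {p k : ℕ} (h : 2^(p+2) < k) : Wcoef (p+1) k = 0 := by
  have h2 : (2:ℕ)^(p+1) ≤ 2^(p+2) := Nat.pow_le_pow_right (by norm_num) (by omega)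
  simp only [Wcoef]
  rw [if_neg (by omega), if_neg (by omega)]

noncomputable def eps (n : ℕ) : ℝ := ((2:ℝ)^(n/4))⁻¹

def goodIdx (k : ℕ) : Prop :=
  Nat.log 2 k % 4 = 0 ∧ Nat.log 2 k ≠ 0 ∧ k < 2^(Nat.log 2 k) + 2^(Nat.log 2 k - 1)

instance : DecidablePred goodIdx := fun k => by unfold goodIdx; infer_instance

noncomputable def zseq (k : ℕ) : ℂ :=
  if goodIdx k then
    (eps (Nat.log 2 k) : ℂ) * (rs (Nat.log 2 k - 1)).1 (k - 2^(Nat.log 2 k))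
      / ((Wcoef (Nat.log 2 k) k : ℝ) : ℂ)
  else 0

lemma pow_succ_nat (n : ℕ) : (2:ℕ)^(n+1) = 2^n + 2^n := by rw [pow_succ]; ring

lemma log_eq_on_block {n k : ℕ} (h1 : 2^n ≤ k) (h2 : k < 2^n + 2^(n-1)) (hn : n ≠ 0) :
    Nat.log 2 k = n := by
  apply Nat.log_eq_of_pow_le_of_lt_pow h1
  have e1 : (2:ℕ)^(n-1) ≤ 2^n := Nat.pow_le_pow_right (by norm_num) (by omega)
  have e2 : (2:ℕ)^(n+1) = 2^n + 2^n := pow_succ_nat n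
  omega

lemma zseq_on_block {n k : ℕ} (hn4 : n % 4 = 0) (hn : n ≠ 0)
    (h1 : 2^n ≤ k) (h2 : k < 2^n + 2^(n-1)) :
    zseq k = (eps n : ℂ) * (rs (n-1)).1 (k - 2^n) / ((Wcoef n k : ℝ) : ℂ) := by
  have hlog : Nat.log 2 k = n := log_eq_on_block h1 h2 hn
  have hg : goodIdx k := by
    unfold goodIdx
    rw [hlog]
    exact ⟨hn4, hn, h2⟩
  unfold zseq
  rw [if_pos hg, hlog]

lemma Wcoef_pos_on_block {n k : ℕ} (hn : n ≠ 0)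
    (h1 : 2^n ≤ k) (h2 : k < 2^n + 2^(n-1)) :
    1/2 ≤ Wcoef n k ∧ Wcoef n k ≤ 1 := by
  obtain ⟨p, rfl⟩ : ∃ p, n = p + 1 := ⟨n - 1, by omega⟩
  have : p + 1 - 1 = p := by omega
  rw [this] at h2
  exact Wcoef_lower h1 h2

/-- The key coefficient computation. -/
lemma coef_eq (q : ℕ) (k : ℕ) :
    zseq k * ((Wcoef (4*q+4) k : ℝ) : ℂ) =
      if 2^(4*q+4) ≤ k ∧ k < 2^(4*q+4) + 2^(4*q+3) then
        (eps (4*q+4) : ℂ) * (rs (4*q+3)).1 (k - 2^(4*q+4)) else 0 := by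
  set n := 4*q+4 with hn
  have hn4 : n % 4 = 0 := by omega
  have hn0 : n ≠ 0 := by omega
  have hn1 : n - 1 = 4*q+3 := by omega
  by_cases hb : 2^n ≤ k ∧ k < 2^n + 2^(n-1)
  · rw [if_pos (by rw [← hn1]; exact hb)]
    rw [zseq_on_block hn4 hn0 hb.1 hb.2, hn1]
    have hW := Wcoef_pos_on_block hn0 hb.1 hb.2
    have hWne : ((Wcoef n k : ℝ) : ℂ) ≠ 0 := by
      simp only [ne_eq, Complex.ofReal_eq_zero]
      intro h
      rw [h] at hW
      linarith [hW.1]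
    rw [div_mul_cancel₀ _ hWne]
  · rw [if_neg (by rw [hn1] at hb; exact hb)]
    by_cases hz : zseq k = 0
    · rw [hz, zero_mul]
    · -- zseq k ≠ 0, so goodIdx k holds; show Wcoef n k = 0
      have hg : goodIdx k := by
        by_contra hng
        exact hz (by unfold zseq; rw [if_neg hng])
      obtain ⟨hm4, hm0, hmk⟩ := hg
      set m := Nat.log 2 k with hm
      have hk0 : k ≠ 0 := by
        intro h
        rw [h] at hm
        simp only [Nat.log_zero_right] at hm
        omega
      have hklow : 2^m ≤ k := Nat.pow_log_le_self 2 hk0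
      have hkhigh : k < 2^(m+1) := Nat.lt_pow_succ_log_self (by norm_num) k
      have hmn : m ≠ n := by
        intro h
        rw [h] at hklow hmk
        exact hb ⟨hklow, hmk⟩
      suffices hW : Wcoef n k = 0 by rw [hW]; simp
      obtain ⟨p, hp⟩ : ∃ p, n = p + 1 := ⟨n - 1, by omega⟩
      rcases lt_or_gt_of_ne hmn with hlt | hgt
      · -- m ≤ n - 4
        have hm_le : m + 4 ≤ n := by omega
        have : k < 2^p := by
          calc k < 2^(m+1) := hkhigh
          _ ≤ 2^p := Nat.pow_le_pow_right (by norm_num) (by omega)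
        rw [hp]
        exact Wcoef_zero_left this
      · have hm_ge : n + 4 ≤ m := by omega
        have : 2^(p+2) < k := by
          calc 2^(p+2) < 2^m := Nat.pow_lt_pow_right (by norm_num) (by omega)
          _ ≤ k := hklow
        rw [hp]
        exact Wcoef_zero_right this

lemma convW_eq (q : ℕ) (w : ℂ) :
    convW zseq (4*q+4) w = (eps (4*q+4) : ℂ) * (w^(2^(4*q+4)) * Pe (4*q+3) w) := by
  set n := 4*q+4 with hn
  unfold convW
  have hsub : Finset.Ico (2^n) (2^n + 2^(4*q+3)) ⊆ Finset.range (2^(n+1)+1) := by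
    intro k hk
    rw [Finset.mem_Ico] at hk
    rw [Finset.mem_range]
    have e1 : (2:ℕ)^(4*q+3) ≤ 2^n := Nat.pow_le_pow_right (by norm_num) (by omega)
    have e2 : (2:ℕ)^(n+1) = 2^n + 2^n := by rw [pow_succ]; ring
    omega
  have step1 : ∀ k ∈ Finset.range (2^(n+1)+1),
      zseq k * ((Wcoef n k : ℝ) : ℂ) * w^k
        = if k ∈ Finset.Ico (2^n) (2^n + 2^(4*q+3)) then
            ((eps n : ℝ) : ℂ) * (rs (4*q+3)).1 (k - 2^n) * w^k else 0 := by
    intro k _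
    rw [coef_eq q k]
    by_cases h : 2^n ≤ k ∧ k < 2^n + 2^(4*q+3)
    · rw [if_pos h, if_pos (Finset.mem_Ico.mpr h)]
    · rw [if_neg h, if_neg (fun hc => h (Finset.mem_Ico.mp hc)), zero_mul]
  rw [Finset.sum_congr rfl step1]
  rw [Finset.sum_ite_mem, Finset.inter_eq_right.mpr hsub]
  rw [Finset.sum_Ico_eq_sum_range]
  rw [Nat.add_sub_cancel_left]
  unfold Pe
  rw [Finset.mul_sum, Finset.mul_sum]
  apply Finset.sum_congr rfl fun j hj => ?_
  rw [Nat.add_sub_cancel_left, pow_add]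
  ring

lemma l1_lower (q : ℕ) : (2:ℝ)^q ≤ l1Circle (convW zseq (4*q+4)) := by
  have hπ : (0:ℝ) < Real.pi := Real.pi_pos
  set n := 4*q+4 with hn
  set s := 4*q+3 with hs
  have hcontPe : Continuous (fun θ : ℝ => Pe s (Complex.exp (θ * Complex.I))) := by
    unfold Pe
    refine continuous_finset_sum _ fun k _ => continuous_const.mul ?_
    exact (Complex.continuous_exp.comp (Complex.continuous_ofReal.mul continuous_const)).pow k
  have hnorm1 : ∀ θ : ℝ, ‖Complex.exp (θ * Complex.I)‖ = 1 := fun θ => by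
    rw [Complex.norm_exp_ofReal_mul_I]
  have heps : 0 < eps n := by unfold eps; positivity
  have key : ∀ θ : ℝ, ‖convW zseq n (Complex.exp (θ * Complex.I))‖
      = eps n * ‖Pe s (Complex.exp (θ * Complex.I))‖ := by
    intro θ
    rw [hn, convW_eq q, norm_mul, norm_mul, norm_pow, hnorm1, one_pow, one_mul]
    rw [Complex.norm_real, Real.norm_eq_abs, abs_of_pos heps]
  -- Parseval value
  have hPe_exp : ∀ θ : ℝ, Pe s (Complex.exp (θ * Complex.I))
      = ∑ k ∈ range (2^s), (rs s).1 k * Complex.exp (k * θ * Complex.I) := by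
    intro θ
    unfold Pe
    refine Finset.sum_congr rfl fun k _ => ?_
    rw [← Complex.exp_nat_mul]
    ring_nf
  have hpars : (∫ θ in (0:ℝ)..(2*Real.pi), ‖Pe s (Complex.exp (θ * Complex.I))‖^2)
      = 2 * Real.pi * 2^s := by
    simp_rw [hPe_exp]
    rw [parseval (2^s) (rs s).1]
    congr 1
    have : ∀ k ∈ range (2^s), ‖(rs s).1 k‖^2 = (1:ℝ) := by
      intro k hk
      rw [(rs_norm s k (Finset.mem_range.mp hk)).1]
      norm_num
    rw [Finset.sum_congr rfl this]
    simp
  -- pointwise sup bound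
  have hsup : ∀ θ : ℝ, ‖Pe s (Complex.exp (θ * Complex.I))‖ ≤ 2^(2*q+2) := by
    intro θ
    have h := PQ_norm s (hnorm1 θ)
    have h1 : ‖Pe s (Complex.exp (θ * Complex.I))‖^2 ≤ 2^(s+1) := by
      nlinarith [sq_nonneg (‖Qe s (Complex.exp (θ * Complex.I))‖)]
    have h2 : (2:ℝ)^(s+1) = (2^(2*q+2))^2 := by
      rw [← pow_mul]
      congr 1
      omega
    nlinarith [norm_nonneg (Pe s (Complex.exp (θ * Complex.I))), pow_pos (by norm_num : (0:ℝ) < 2) (2*q+2)]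
  -- integral comparison
  set A := ∫ θ in (0:ℝ)..(2*Real.pi), ‖Pe s (Complex.exp (θ * Complex.I))‖ with hA
  have hint1 : IntervalIntegrable (fun θ : ℝ => ‖Pe s (Complex.exp (θ * Complex.I))‖^2)
      MeasureTheory.volume 0 (2*Real.pi) := (hcontPe.norm.pow 2).intervalIntegrable _ _
  have hint2 : IntervalIntegrable (fun θ : ℝ => (2:ℝ)^(2*q+2) * ‖Pe s (Complex.exp (θ * Complex.I))‖)
      MeasureTheory.volume 0 (2*Real.pi) := (continuous_const.mul hcontPe.norm).intervalIntegrable _ _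
  have hcomp : (∫ θ in (0:ℝ)..(2*Real.pi), ‖Pe s (Complex.exp (θ * Complex.I))‖^2)
      ≤ (2:ℝ)^(2*q+2) * A := by
    rw [hA, ← intervalIntegral.integral_const_mul]
    apply intervalIntegral.integral_mono_on (by positivity) hint1 hint2
    intro θ _
    have := hsup θ
    have hnn := norm_nonneg (Pe s (Complex.exp (θ * Complex.I)))
    nlinarith
  have hAlow : 2 * Real.pi * 2^s / 2^(2*q+2) ≤ A := by
    rw [div_le_iff₀ (by positivity)]
    calc 2 * Real.pi * 2^s = _ := hpars.symm
    _ ≤ (2:ℝ)^(2*q+2) * A := hcomp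
    _ = A * 2^(2*q+2) := by ring
  -- assemble
  have hl1 : l1Circle (convW zseq n) = (2*Real.pi)⁻¹ * (eps n * A) := by
    unfold l1Circle
    congr 1
    rw [hA]
    simp_rw [key]
    rw [intervalIntegral.integral_const_mul]
  rw [hl1]
  have hfinal : (2*Real.pi)⁻¹ * (eps n * (2 * Real.pi * 2^s / 2^(2*q+2))) = 2^q := by
    have hepsval : eps n = ((2:ℝ)^(q+1))⁻¹ := by
      unfold eps
      congr 2
      omega
    rw [hepsval, hs]
    have hpow : (2:ℝ)^(4*q+3) = 2^(q+1) * 2^(2*q+2) * 2^q := by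
      rw [← pow_add, ← pow_add]
      congr 1
      omega
    rw [hpow]
    field_simp
  calc (2:ℝ)^q = (2*Real.pi)⁻¹ * (eps n * (2 * Real.pi * 2^s / 2^(2*q+2))) := hfinal.symm
  _ ≤ (2*Real.pi)⁻¹ * (eps n * A) := by
      apply mul_le_mul_of_nonneg_left _ (by positivity)
      exact mul_le_mul_of_nonneg_left hAlow (le_of_lt heps)

lemma eps_pos (n : ℕ) : 0 < eps n := by unfold eps; positivity

lemma zseq_norm_le (k : ℕ) : ‖zseq k‖ ≤ 2 * eps (Nat.log 2 k) := by
  unfold zseq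
  split_ifs with hg
  · obtain ⟨h4, h0, hk⟩ := hg
    set m := Nat.log 2 k with hm
    have hk0 : k ≠ 0 := by
      intro h
      rw [h] at hm
      simp only [Nat.log_zero_right] at hm
      omega
    have hklow : 2^m ≤ k := Nat.pow_log_le_self 2 hk0
    have hW := Wcoef_pos_on_block h0 hklow hk
    have hWpos : 0 < Wcoef m k := by linarith [hW.1]
    have hidx : k - 2^m < 2^(m-1) := by omega
    have hc : ‖(rs (m-1)).1 (k - 2^m)‖ = 1 := (rs_norm (m-1) _ hidx).1
    rw [norm_div, norm_mul, hc, mul_one, Complex.norm_real, Complex.norm_real,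
      Real.norm_eq_abs, Real.norm_eq_abs, abs_of_pos (eps_pos m), abs_of_pos hWpos]
    rw [div_le_iff₀ hWpos]
    nlinarith [eps_pos m, hW.1]
  · rw [norm_zero]
    have := eps_pos (Nat.log 2 k)
    linarith

lemma log_tendsto : Tendsto (fun k => Nat.log 2 k) atTop atTop := by
  apply tendsto_atTop_atTop.mpr
  intro b
  refine ⟨2^b, fun k hk => ?_⟩
  have hk0 : k ≠ 0 := by
    have : 1 ≤ 2^b := Nat.one_le_two_pow
    omega
  exact (Nat.le_log_iff_pow_le (by norm_num) hk0).mpr hk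

lemma zseq_tendsto : Tendsto zseq atTop (nhds 0) := by
  rw [tendsto_zero_iff_norm_tendsto_zero]
  apply squeeze_zero (fun k => norm_nonneg _) zseq_norm_le
  have h1 : Tendsto (fun j : ℕ => ((2:ℝ)^j)⁻¹) atTop (nhds 0) := by
    simp_rw [← inv_pow]
    exact tendsto_pow_atTop_nhds_zero_of_lt_one (by norm_num) (by norm_num)
  have h2 : Tendsto (fun m : ℕ => m / 4) atTop atTop := by
    apply tendsto_atTop_atTop.mpr
    intro b
    exact ⟨4*b, fun m hm => by omega⟩
  have h3 : Tendsto (fun k => eps (Nat.log 2 k)) atTop (nhds 0) := by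
    unfold eps
    exact (h1.comp h2).comp log_tendsto
  have := h3.const_mul (2:ℝ)
  simpa using this

/-- The space `c` is not contained in the set of Taylor coefficient sequences of functions
in `B⁰_{1,∞}`. -/
theorem exists_convergent_not_B01inf :
    ∃ z : ℕ → ℂ, IsConvergent z ∧ ¬ MemB01inf z := by
  refine ⟨zseq, ⟨0, zseq_tendsto⟩, ?_⟩
  rintro ⟨C, hC⟩
  obtain ⟨q, hq⟩ := pow_unbounded_of_one_lt C (by norm_num : (1:ℝ) < 2)
  have h1 := hC (4*q+4)
  have h2 := l1_lower q
  linarith
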